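/- For the flow π_t of the system w' = r_w w(1-w), g' = r_g g(1-g-w) with r_w, r_g > 0, every initial point y ∈ (0,1) × (0,1) satisfies π_t(y) → (1,0) as t → ∞. -/

import Mathlib

open Set Filter

/-- Exponential representation of solutions of linear ODEs `f' = a·f` on `[0,∞)`. -/
lemma expRep (a f : ℝ → ℝ) (ha : ContinuousOn a (Ici 0))
    (hf : ∀ t, 0 ≤ t → HasDerivAt f (a t * f t) t) :
    ∀ t, 0 ≤ t → f t = f 0 * Real.exp (∫ s in (0:ℝ)..t, a s) := by
  set b : ℝ → ℝ := fun u => a (max u 0) with hbdef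
  have hbc : Continuous b :=
    ha.comp_continuous (continuous_id.max continuous_const) (fun x => le_max_right x 0)
  have hba : ∀ t, 0 ≤ t → b t = a t := fun t ht => by simp [hbdef, max_eq_left ht]
  set A : ℝ → ℝ := fun u => ∫ s in (0:ℝ)..u, b s with hAdef
  have hAd : ∀ t : ℝ, HasDerivAt A (b t) t := fun t =>
    intervalIntegral.integral_hasDerivAt_right (hbc.intervalIntegrable _ _)
      (hbc.stronglyMeasurableAtFilter _ _) hbc.continuousAt
  set G : ℝ → ℝ := fun u => f u * Real.exp (-A u) with hGdef
  have hGd : ∀ t, 0 ≤ t → HasDerivAt G 0 t := by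
    intro t ht
    have h1 : HasDerivAt (fun u => Real.exp (-A u)) (Real.exp (-A t) * (-(b t))) t :=
      ((hAd t).neg).exp
    have h2 := (hf t ht).mul h1
    exact h2.congr_deriv (by rw [hba t ht]; ring)
  intro T hT
  have hfc : ContinuousOn f (Icc 0 T) := fun t ht =>
    (hf t ht.1).continuousAt.continuousWithinAt
  have hec : Continuous fun u => Real.exp (-A u) :=
    continuous_iff_continuousAt.2 fun t => ((hAd t).neg.exp).continuousAt
  have hGc : ContinuousOn G (Icc 0 T) := hfc.mul hec.continuousOn
  have key := constant_of_has_deriv_right_zero hGc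
    (fun x hx => (hGd x hx.1).hasDerivWithinAt) T ⟨hT, le_rfl⟩
  have hA0 : A 0 = 0 := intervalIntegral.integral_same
  have hG0 : G 0 = f 0 := by simp [hGdef, hA0]
  rw [hG0] at key
  have hAeq : A T = ∫ s in (0:ℝ)..T, a s := by
    apply intervalIntegral.integral_congr
    intro s hs
    rw [uIcc_of_le hT] at hs
    exact hba s hs.1
  have hexp : Real.exp (-A T) * Real.exp (A T) = 1 := by
    rw [← Real.exp_add]; simp
  have : f T * Real.exp (-A T) = f 0 := key
  calc f T = f T * (Real.exp (-A T) * Real.exp (A T)) := by rw [hexp]; ring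
    _ = (f T * Real.exp (-A T)) * Real.exp (A T) := by ring
    _ = f 0 * Real.exp (∫ s in (0:ℝ)..T, a s) := by rw [this, hAeq]

/-- If past time `T` the derivative of `f` is `≤ -c < 0` whenever `f ≥ ε`, then
eventually `f < ε`. -/
lemma eventually_lt_of_deriv_neg (f f' : ℝ → ℝ) (T ε c : ℝ) (hc : 0 < c)
    (hd : ∀ t, T ≤ t → HasDerivAt f (f' t) t)
    (hb : ∀ t, T ≤ t → ε ≤ f t → f' t ≤ -c) :
    ∀ᶠ t in atTop, f t < ε := by
  have step1 : ∃ t₀, T ≤ t₀ ∧ f t₀ < ε := by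
    by_contra h
    push_neg at h
    have hφ : AntitoneOn (fun t => f t + c * t) (Ici T) := by
      have hder : ∀ t, T ≤ t → HasDerivAt (fun t => f t + c * t) (f' t + c) t := by
        intro t ht
        have := (hd t ht).add ((hasDerivAt_id t).const_mul c)
        exact this.congr_deriv (by simp)
      apply antitoneOn_of_deriv_nonpos (convex_Ici T)
      · exact fun t ht => (hder t ht).continuousAt.continuousWithinAt
      · intro t ht
        rw [interior_Ici] at ht
        exact (hder t ht.le).differentiableAt.differentiableWithinAt
      · intro t ht
        rw [interior_Ici] at ht
        rw [(hder t ht.le).deriv]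
        have := hb t ht.le (h t ht.le)
        linarith
    set t₁ := max T ((f T + c * T - ε) / c + 1) with ht₁def
    have h1 : T ≤ t₁ := le_max_left _ _
    have h2 := hφ (mem_Ici.2 le_rfl) (mem_Ici.2 h1) h1
    have h3 := h t₁ h1
    have h4 : (f T + c * T - ε) / c + 1 ≤ t₁ := le_max_right _ _
    have h5 : f T + c * T - ε + c ≤ c * t₁ := by
      have := (div_le_iff₀ hc).1 (by linarith : (f T + c * T - ε) / c ≤ t₁ - 1)
      linarith
    simp only at h2
    linarith
  obtain ⟨t₀, ht₀T, ht₀⟩ := step1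
  rw [eventually_atTop]
  refine ⟨t₀, fun t₁ ht₁ => ?_⟩
  by_contra hcon
  push_neg at hcon
  have ht₀t₁ : t₀ < t₁ :=
    lt_of_le_of_ne ht₁ (fun h => absurd hcon (by rw [← h]; exact not_le.2 ht₀))
  set S := {t | t ∈ Icc t₀ t₁ ∧ ε ≤ f t} with hSdef
  have hfc : ContinuousOn f (Icc t₀ t₁) := fun t ht =>
    (hd t (ht₀T.trans ht.1)).continuousAt.continuousWithinAt
  have hScl : IsClosed S := by
    have : S = Icc t₀ t₁ ∩ f ⁻¹' (Ici ε) := by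
      ext t; simp [hSdef, mem_Ici]
    rw [this]
    exact hfc.preimage_isClosed_of_isClosed isClosed_Icc isClosed_Ici
  have hSne : S.Nonempty := ⟨t₁, ⟨ht₀t₁.le, le_rfl⟩, hcon⟩
  have hSbdd : BddBelow S := ⟨t₀, fun x hx => hx.1.1⟩
  set t₂ := sInf S with ht₂def
  have ht₂S : t₂ ∈ S := hScl.csInf_mem hSne hSbdd
  have ht₀t₂ : t₀ < t₂ :=
    lt_of_le_of_ne ht₂S.1.1 (fun h => absurd ht₂S.2 (by rw [← h]; exact not_le.2 ht₀))
  have hlt : ∀ t, t₀ ≤ t → t < t₂ → f t < ε := by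
    intro t h1 h2
    by_contra hge
    push_neg at hge
    have htS : t ∈ S := ⟨⟨h1, h2.le.trans ht₂S.1.2⟩, hge⟩
    exact absurd (csInf_le hSbdd htS) (not_le.2 h2)
  have hT2 : T ≤ t₂ := ht₀T.trans ht₂S.1.1
  have hneg : f' t₂ < 0 := lt_of_le_of_lt (hb t₂ hT2 ht₂S.2) (by linarith)
  have hslope := hasDerivAt_iff_tendsto_slope.1 (hd t₂ hT2)
  have hev1 : ∀ᶠ t in nhdsWithin t₂ (Iio t₂), slope f t₂ t < 0 :=
    ((hslope.mono_left (nhdsWithin_mono _ (fun x hx => ne_of_lt hx))).eventually_lt_const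
      hneg)
  have hev2 : Ioo t₀ t₂ ∈ nhdsWithin t₂ (Iio t₂) :=
    Ioo_mem_nhdsLT ht₀t₂
  obtain ⟨t, hts, htI⟩ := (hev1.and (eventually_of_mem hev2 (fun x hx => hx))).exists
  rw [slope_def_field] at hts
  have h5 : f t < ε := hlt t htI.1.le htI.2
  have h6 : f t - f t₂ < 0 := by linarith [ht₂S.2]
  have h7 : t - t₂ < 0 := by linarith [htI.2]
  have : 0 < (f t - f t₂) / (t - t₂) := div_pos_of_neg_of_neg h6 h7
  linarith

theorem woodland_globally_attracting (rw rg : ℝ) (hrw : 0 < rw) (hrg : 0 < rg)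
    (w g : ℝ → ℝ)
    (hw : ∀ t, 0 ≤ t → HasDerivAt w (rw * w t * (1 - w t)) t)
    (hg : ∀ t, 0 ≤ t → HasDerivAt g (rg * g t * (1 - g t - w t)) t)
    (hinit : (w 0, g 0) ∈ Ioo (0 : ℝ) 1 ×ˢ Ioo (0 : ℝ) 1) :
    Tendsto (fun t => (w t, g t)) atTop (nhds ((1 : ℝ), (0 : ℝ))) := by
  simp only [mem_prod, mem_Ioo] at hinit
  obtain ⟨⟨hw0, hw1⟩, ⟨hg0, hg1⟩⟩ := hinit
  have hwc : ContinuousOn w (Ici 0) := fun t ht => (hw t ht).continuousAt.continuousWithinAt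
  have hgc : ContinuousOn g (Ici 0) := fun t ht => (hg t ht).continuousAt.continuousWithinAt
  -- 1 - w stays positive
  have h1w : ∀ t, 0 ≤ t → 0 < 1 - w t := by
    intro t ht
    have hrep := expRep (fun t => -(rw * w t)) (fun t => 1 - w t)
      ((continuousOn_const.mul hwc).neg)
      (fun t ht => by
        have := (hw t ht).const_sub 1
        exact this.congr_deriv (by ring)) t ht
    rw [hrep]
    have : 0 < 1 - w 0 := by linarith
    positivity
  -- w stays ≥ w 0 (> 0)
  have hwge : ∀ t, 0 ≤ t → w 0 ≤ w t := by
    intro t ht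
    have hrep := expRep (fun t => rw * (1 - w t)) w
      (continuousOn_const.mul (continuousOn_const.sub hwc))
      (fun t ht => by
        have := hw t ht
        convert this using 1; ring) t ht
    rw [hrep]
    have hint : 0 ≤ ∫ s in (0:ℝ)..t, rw * (1 - w s) :=
      intervalIntegral.integral_nonneg ht
        (fun s hs => mul_nonneg hrw.le (by linarith [h1w s hs.1]))
    nlinarith [Real.one_le_exp hint, hw0]
  -- g stays positive
  have hgpos : ∀ t, 0 ≤ t → 0 < g t := by
    intro t ht
    have hrep := expRep (fun t => rg * (1 - g t - w t)) g
      (continuousOn_const.mul ((continuousOn_const.sub hgc).sub hwc))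
      (fun t ht => by
        have := hg t ht
        convert this using 1; ring) t ht
    rw [hrep]
    positivity
  -- w tends to 1
  have htw : Tendsto w atTop (nhds 1) := by
    rw [Metric.tendsto_atTop]
    intro ε hε
    have hth := eventually_lt_of_deriv_neg (fun t => 1 - w t)
      (fun t => -(rw * w t * (1 - w t))) 0 ε (rw * w 0 * ε)
      (by positivity)
      (fun t ht => (hw t ht).const_sub 1)
      (fun t ht hε' => by
        have h1 := hwge t ht
        have h2 : w 0 * ε ≤ w t * (1 - w t) :=
          mul_le_mul h1 hε' hε.le (by linarith)
        nlinarith)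
    have := hth.and (eventually_ge_atTop (0:ℝ))
    rw [eventually_atTop] at this
    obtain ⟨N, hN⟩ := this
    refine ⟨N, fun t ht => ?_⟩
    obtain ⟨h1, h2⟩ := hN t ht
    have h3 := h1w t h2
    rw [Real.dist_eq, abs_of_neg (by linarith : w t - 1 < 0)]
    linarith
  -- g tends to 0
  have htg : Tendsto g atTop (nhds 0) := by
    rw [Metric.tendsto_atTop]
    intro ε hε
    obtain ⟨T₀, hT₀⟩ := (Metric.tendsto_atTop.1 htw) (ε / 2) (by positivity)
    set T := max T₀ 0 with hTdef
    have hth := eventually_lt_of_deriv_neg g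
      (fun t => rg * g t * (1 - g t - w t)) T ε (rg * ε * (ε / 2))
      (by positivity)
      (fun t ht => hg t (le_trans (le_max_right _ _) ht))
      (fun t ht hε' => by
        have hwt := hT₀ t (le_trans (le_max_left _ _) ht)
        have hgt := hgpos t (le_trans (le_max_right _ _) ht)
        rw [Real.dist_eq, abs_lt] at hwt
        have hA : 1 - g t - w t ≤ -(ε / 2) := by linarith [hwt.2]
        have h8 : g t * (1 - g t - w t) ≤ -(ε * (ε / 2)) := by nlinarith
        nlinarith [mul_le_mul_of_nonneg_left h8 hrg.le])
    have := hth.and (eventually_ge_atTop (0:ℝ))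
    rw [eventually_atTop] at this
    obtain ⟨N, hN⟩ := this
    refine ⟨N, fun t ht => ?_⟩
    obtain ⟨h1, h2⟩ := hN t ht
    have h3 := hgpos t h2
    rw [Real.dist_eq, sub_zero, abs_of_pos h3]
    exact h1
  exact htw.prodMk_nhds htg
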